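/- For every ultrafilter M on ℕ, the following are equivalent: (1) M is self-divisible, i.e. D(M) = {n ∈ ℕ : nℕ ∈ M} ∈ M, where nℕ = {nk : k ∈ ℕ}; (2) the relation ≡_M is an equivalence relation on βℤ. -/

import Mathlib

/-- The tensor product of ultrafilters on `ℤ`:
`A ∈ F ⊗ G` iff `{x : {y : (x,y) ∈ A} ∈ G} ∈ F`. -/
def tensor (F G : Ultrafilter ℤ) : Ultrafilter (ℤ × ℤ) :=
  F.bind fun x => Ultrafilter.map (fun y => (x, y)) G

/-- `F ≡_M G`: for every `A ∈ M`,
`{(x,y) : ∃ m ∈ A, m ∣ x − y} ∈ F ⊗ G`. -/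
def congMod (M : Ultrafilter ℕ+) (F G : Ultrafilter ℤ) : Prop :=
  ∀ A ∈ M, {p : ℤ × ℤ | ∃ m ∈ A, ((m : ℕ) : ℤ) ∣ p.1 - p.2} ∈ tensor F G

namespace SD18

lemma mem_tensor {F G : Ultrafilter ℤ} {A : Set (ℤ × ℤ)} :
    A ∈ tensor F G ↔ {x : ℤ | {y : ℤ | (x, y) ∈ A} ∈ G} ∈ F := Iff.rfl

/-- From a finite cover, an ultrafilter contains one piece. -/
lemma exists_mem_of_cover {α ι : Type*} (U : Ultrafilter α) (t : Finset ι)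
    (f : ι → Set α) (hcov : ∀ a : α, ∃ i ∈ t, a ∈ f i) : ∃ i ∈ t, f i ∈ U := by
  by_contra h
  push_neg at h
  have h2 : ∀ i ∈ (t : Set ι), (f i)ᶜ ∈ U := fun i hi =>
    (Ultrafilter.compl_mem_iff_notMem).2 (h i hi)
  have h3 : (⋂ i ∈ (t : Set ι), (f i)ᶜ) ∈ U := (Filter.biInter_mem t.finite_toSet).2 h2
  obtain ⟨a, ha⟩ := U.nonempty_of_mem h3
  simp only [Set.mem_iInter, Set.mem_compl_iff] at ha
  obtain ⟨i, hi, hai⟩ := hcov a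
  exact ha i hi hai

lemma exists_resZ (F : Ultrafilter ℤ) (L : ℕ+) :
    ∃ r : ℤ, {x : ℤ | x % ((L : ℕ) : ℤ) = r} ∈ F := by
  have hL : (0:ℤ) < ((L:ℕ):ℤ) := by exact_mod_cast L.pos
  have hcov : ∀ a : ℤ, ∃ i ∈ Finset.range (L:ℕ), a ∈ {x : ℤ | x % ((L:ℕ):ℤ) = (i : ℤ)} := by
    intro a
    have h1 : a % ((L:ℕ):ℤ) < ((L:ℕ):ℤ) := Int.emod_lt_of_pos a hL
    have h0 : 0 ≤ a % ((L:ℕ):ℤ) := Int.emod_nonneg a (ne_of_gt hL)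
    refine ⟨(a % ((L:ℕ):ℤ)).toNat, ?_, ?_⟩
    · rw [Finset.mem_range]; omega
    · simp only [Set.mem_setOf_eq]; omega
  obtain ⟨i, _, hi⟩ := exists_mem_of_cover F (Finset.range (L:ℕ))
    (fun r => {x : ℤ | x % ((L:ℕ):ℤ) = (r : ℤ)}) hcov
  exact ⟨(i : ℤ), hi⟩

/-- the residue of an ultrafilter on ℤ mod L -/
noncomputable def resZ (F : Ultrafilter ℤ) (L : ℕ+) : ℤ :=
  Classical.choose (exists_resZ F L)

lemma resZ_mem (F : Ultrafilter ℤ) (L : ℕ+) :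
    {x : ℤ | x % ((L : ℕ) : ℤ) = resZ F L} ∈ F :=
  Classical.choose_spec (exists_resZ F L)

end SD18

namespace SD18F

open SD18

lemma resZ_dvd_sub {L : ℕ+} {x y : ℤ} {r : ℤ}
    (hx : x % ((L:ℕ):ℤ) = r) (hy : y % ((L:ℕ):ℤ) = r) : ((L:ℕ):ℤ) ∣ x - y :=
  Int.ModEq.dvd (show Int.ModEq _ y x from (hy.trans hx.symm))

lemma congMod_of_res {M : Ultrafilter ℕ+} {F G : Ultrafilter ℤ}
    (h : ∀ A ∈ M, ∃ m ∈ A, resZ F m = resZ G m) : congMod M F G := by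
  intro A hA
  obtain ⟨m, hm, hres⟩ := h A hA
  rw [mem_tensor]
  refine Filter.mem_of_superset (resZ_mem F m) ?_
  intro x hx
  simp only [Set.mem_setOf_eq] at hx ⊢
  refine Filter.mem_of_superset (resZ_mem G m) ?_
  intro y hy
  simp only [Set.mem_setOf_eq] at hy ⊢
  exact ⟨m, hm, resZ_dvd_sub hx (by rw [hy, hres])⟩

lemma res_eq_of_congMod {M : Ultrafilter ℕ+} {F G : Ultrafilter ℤ} (h : congMod M F G) {n : ℕ+}
    (hn : {x : ℕ+ | ∃ k : ℕ+, x = n * k} ∈ M) : resZ F n = resZ G n := by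
  have hA := h _ hn
  rw [mem_tensor] at hA
  have h1 : {x : ℤ | {y : ℤ | ((n:ℕ):ℤ) ∣ x - y} ∈ G} ∈ F := by
    refine Filter.mem_of_superset hA ?_
    intro x hx; simp only [Set.mem_setOf_eq] at hx ⊢
    refine Filter.mem_of_superset hx ?_
    intro y hy; simp only [Set.mem_setOf_eq] at hy ⊢
    obtain ⟨m, hm, hdvd⟩ := hy
    obtain ⟨k, hk⟩ := hm
    refine dvd_trans ?_ hdvd
    have : (m : ℕ) = (n : ℕ) * (k : ℕ) := by rw [hk]; exact PNat.mul_coe n k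
    exact_mod_cast Dvd.intro (k : ℕ) (by rw [this, mul_comm])
  obtain ⟨x, hx1, hx2⟩ := Ultrafilter.nonempty_of_mem (Filter.inter_mem h1 (resZ_mem F n))
  obtain ⟨y, hy1, hy2⟩ := Ultrafilter.nonempty_of_mem (Filter.inter_mem hx1 (resZ_mem G n))
  have hmod : y % ((n:ℕ):ℤ) = x % ((n:ℕ):ℤ) := Int.modEq_of_dvd (by exact hy1)
  rw [← hx2, ← hy2, hmod]

end SD18F

namespace SD18F

lemma forward {M : Ultrafilter ℕ+}
    (hD : {n : ℕ+ | {x : ℕ+ | ∃ k : ℕ+, x = n * k} ∈ M} ∈ M) : Equivalence (congMod M) := by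
  constructor
  · intro F
    apply congMod_of_res
    intro A hA
    obtain ⟨m, hm⟩ := Ultrafilter.nonempty_of_mem hA
    exact ⟨m, hm, rfl⟩
  · intro F G h
    apply congMod_of_res
    intro A hA
    obtain ⟨m, hm⟩ := Ultrafilter.nonempty_of_mem (Filter.inter_mem hA hD)
    exact ⟨m, hm.1, (res_eq_of_congMod h hm.2).symm⟩
  · intro F G H h1 h2
    apply congMod_of_res; intro A hA
    obtain ⟨m, hm⟩ := Ultrafilter.nonempty_of_mem (Filter.inter_mem hA hD)
    exact ⟨m, hm.1, (res_eq_of_congMod h1 hm.2).trans (res_eq_of_congMod h2 hm.2)⟩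

end SD18F

namespace SD18B

open SD18

variable (M : Ultrafilter ℕ+)

/-- `d` divides `M` : the set of positive multiples of `d` is in `M`. -/
def DN (d : ℕ) : Prop := {n : ℕ+ | d ∣ (n : ℕ)} ∈ M

lemma DN_one : DN M 1 := by
  have : {n : ℕ+ | (1:ℕ) ∣ (n : ℕ)} = Set.univ := by
    ext n; simp
  rw [DN, this]; exact Filter.univ_mem

lemma DN_of_dvd {e d : ℕ} (h : e ∣ d) (hd : DN M d) : DN M e :=
  Filter.mem_of_superset hd (fun n hn => dvd_trans h hn)

lemma DN_of_prime_pows {m : ℕ} (hm : m ≠ 0)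
    (h : ∀ p a : ℕ, Nat.Prime p → p ^ a ∣ m → DN M (p ^ a)) : DN M m := by
  have key : (⋂ p ∈ ((m.primeFactors : Finset ℕ) : Set ℕ),
      {n : ℕ+ | p ^ (m.factorization p) ∣ (n:ℕ)}) ∈ M := by
    refine (Filter.biInter_mem (Finset.finite_toSet _)).2 ?_
    intro p hp
    exact h p _ (Nat.prime_of_mem_primeFactors hp) (Nat.ordProj_dvd m p)
  refine Filter.mem_of_superset key ?_
  intro n hn
  simp only [Set.mem_iInter, Set.mem_setOf_eq] at hn ⊢
  rw [Nat.dvd_iff_prime_pow_dvd_dvd]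
  intro p k hp hpk
  have hp' : Nat.Prime p := hp
  by_cases hk : k = 0
  · simpa [hk] using one_dvd _
  · have hpm : p ∣ m := dvd_trans (dvd_pow_self p hk) hpk
    have hmem : p ∈ m.primeFactors := Nat.mem_primeFactors.2 ⟨hp', hpm, hm⟩
    have hk_le : k ≤ m.factorization p :=
      (Nat.Prime.pow_dvd_iff_le_factorization hp' hm).1 hpk
    exact dvd_trans (pow_dvd_pow p hk_le) (hn p hmem)

lemma exists_rr (L : ℕ+) : ∃ r : ℕ, {n : ℕ+ | (n:ℕ) % (L:ℕ) = r} ∈ M := by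
  have hcov : ∀ n : ℕ+, ∃ i ∈ Finset.range (L:ℕ), n ∈ {n : ℕ+ | (n:ℕ) % (L:ℕ) = i} := by
    intro n
    exact ⟨(n:ℕ) % (L:ℕ), Finset.mem_range.2 (Nat.mod_lt _ L.pos), rfl⟩
  obtain ⟨i, _, hi⟩ := exists_mem_of_cover M (Finset.range (L:ℕ))
    (fun r => {n : ℕ+ | (n:ℕ) % (L:ℕ) = r}) hcov
  exact ⟨i, hi⟩

/-- the residue of `M` mod `L`. -/
noncomputable def rr (L : ℕ+) : ℕ := (exists_rr M L).choose

def KK (L : ℕ+) : Set ℕ+ := {n : ℕ+ | (n:ℕ) % (L:ℕ) = rr M L}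

lemma KK_mem (L : ℕ+) : KK M L ∈ M := (exists_rr M L).choose_spec

lemma rr_lt (L : ℕ+) : rr M L < (L:ℕ) := by
  obtain ⟨n, hn⟩ := Ultrafilter.nonempty_of_mem (KK_mem M L)
  have h : (n:ℕ) % (L:ℕ) = rr M L := hn
  rw [← h]
  exact Nat.mod_lt _ L.pos

lemma KK_modeq {L : ℕ+} {n : ℕ+} (hn : n ∈ KK M L) : (n:ℕ) ≡ rr M L [MOD (L:ℕ)] := by
  have h : (n:ℕ) % (L:ℕ) = rr M L := hn
  unfold Nat.ModEq
  rw [h, Nat.mod_eq_of_lt (rr_lt M L)]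

lemma rr_coherent {d L : ℕ+} (h : (d:ℕ) ∣ (L:ℕ)) : rr M L ≡ rr M d [MOD (d:ℕ)] := by
  obtain ⟨n, h1, h2⟩ := Ultrafilter.nonempty_of_mem (Filter.inter_mem (KK_mem M L) (KK_mem M d))
  exact (((KK_modeq M h1).of_dvd h).symm.trans (KK_modeq M h2))

lemma dvd_rr_of_DN {g : ℕ} {L : ℕ+} (hg : DN M g) (hdvd : g ∣ (L:ℕ)) : g ∣ rr M L := by
  obtain ⟨n, h1, h2⟩ := Ultrafilter.nonempty_of_mem (Filter.inter_mem (KK_mem M L) hg)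
  have hmod : (n:ℕ) ≡ rr M L [MOD g] := (KK_modeq M h1).of_dvd hdvd
  have : (0:ℕ) ≡ rr M L [MOD g] := (Nat.modEq_zero_iff_dvd.2 h2).symm.trans hmod
  exact (Nat.modEq_zero_iff_dvd.1 this.symm)

lemma DN_of_dvd_rr {d : ℕ} {L : ℕ+} (h1 : d ∣ rr M L) (h2 : d ∣ (L:ℕ)) : DN M d := by
  refine Filter.mem_of_superset (KK_mem M L) ?_
  intro n hn
  have hmod : (n:ℕ) ≡ rr M L [MOD d] := (KK_modeq M hn).of_dvd h2
  have : (n:ℕ) ≡ 0 [MOD d] := hmod.trans (Nat.modEq_zero_iff_dvd.2 h1)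
  exact Nat.modEq_zero_iff_dvd.1 this

end SD18B

namespace SD18B

open SD18 Classical

/-- least bad exponent for p (0 if none) -/
noncomputable def ap (M : Ultrafilter ℕ+) (p : ℕ) : ℕ :=
  if h : ∃ a, ¬ DN M (p ^ a) then Nat.find h else 0

lemma ap_spec {M : Ultrafilter ℕ+} {p : ℕ} (h : ∃ a, ¬ DN M (p ^ a)) :
    ¬ DN M (p ^ ap M p) := by
  rw [ap, dif_pos h]; exact Nat.find_spec h

lemma ap_min {M : Ultrafilter ℕ+} {p : ℕ} (h : ∃ a, ¬ DN M (p ^ a)) {b : ℕ}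
    (hb : b < ap M p) : DN M (p ^ b) := by
  rw [ap, dif_pos h] at hb
  exact not_not.1 (Nat.find_min h hb)

lemma exists_gcd_DN (M : Ultrafilter ℕ+) {A B : Set ℕ+} (hA : A ∈ M) (hB : B ∈ M) :
    ∃ m ∈ A, ∃ m' ∈ B, DN M (Nat.gcd (m:ℕ) (m':ℕ)) := by
  obtain ⟨m, hm⟩ := Ultrafilter.nonempty_of_mem hA
  set S : Finset ℕ := (m:ℕ).primeFactors.filter (fun p => ∃ a, ¬ DN M (p ^ a)) with hS
  have hV : ∀ p ∈ S, {n : ℕ+ | ¬ (p ^ ap M p ∣ (n:ℕ))} ∈ M := by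
    intro p hp
    have hbad : ∃ a, ¬ DN M (p ^ a) := (Finset.mem_filter.1 hp).2
    have : ¬ ({n : ℕ+ | p ^ ap M p ∣ (n:ℕ)} ∈ M) := ap_spec hbad
    have := Ultrafilter.compl_mem_iff_notMem.2 this
    exact this
  have hBV : (B ∩ ⋂ p ∈ (S : Set ℕ), {n : ℕ+ | ¬ (p ^ ap M p ∣ (n:ℕ))}) ∈ M :=
    Filter.inter_mem hB ((Filter.biInter_mem (Finset.finite_toSet _)).2 hV)
  obtain ⟨m', hm'B, hm'V⟩ := Ultrafilter.nonempty_of_mem hBV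
  refine ⟨m, hm, m', hm'B, ?_⟩
  have hm'V' : ∀ p ∈ S, ¬ (p ^ ap M p ∣ (m':ℕ)) := by
    intro p hp
    have := hm'V
    simp only [Set.mem_iInter, Set.mem_setOf_eq] at this
    exact this p hp
  refine DN_of_prime_pows M (Nat.gcd_pos_of_pos_left _ m.pos).ne' ?_
  intro p k hp hpk
  rcases Nat.eq_zero_or_pos k with hk | hk
  · subst hk; simpa using DN_one M
  by_cases hpS : ∃ a, ¬ DN M (p ^ a)
  · have hpkm' : p ^ k ∣ (m':ℕ) := hpk.trans (Nat.gcd_dvd_right _ _)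
    have hpm : p ∣ (m:ℕ) :=
      (dvd_pow_self p hk.ne').trans (hpk.trans (Nat.gcd_dvd_left _ _))
    have hpmem : p ∈ S := by
      refine Finset.mem_filter.2 ⟨?_, hpS⟩
      exact Nat.mem_primeFactors.2 ⟨hp, hpm, m.pos.ne'⟩
    have hklt : k < ap M p := by
      by_contra hge
      push_neg at hge
      exact hm'V' p hpmem ((pow_dvd_pow p hge).trans hpkm')
    exact ap_min hpS hklt
  · push_neg at hpS
    exact hpS k

lemma exists_witness (M : Ultrafilter ℕ+) {A B : Set ℕ+} (hA : A ∈ M) (hB : B ∈ M) :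
    ∃ x : ℕ, (∃ m' ∈ B, (m':ℕ) ∣ x) ∧ (∃ m ∈ A, x ≡ rr M m [MOD (m:ℕ)]) := by
  obtain ⟨m, hm, m', hm', hg⟩ := exists_gcd_DN M hA hB
  have hgr : Nat.gcd (m:ℕ) (m':ℕ) ∣ rr M m := dvd_rr_of_DN M hg (Nat.gcd_dvd_left _ _)
  have hmod : rr M m ≡ 0 [MOD Nat.gcd (m:ℕ) (m':ℕ)] := Nat.modEq_zero_iff_dvd.2 hgr
  obtain ⟨k, hk1, hk2⟩ := Nat.chineseRemainder' hmod
  exact ⟨k, ⟨m', hm', Nat.modEq_zero_iff_dvd.1 hk2⟩, ⟨m, hm, hk1⟩⟩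

end SD18B

namespace SD18B

open SD18

variable (M : Ultrafilter ℕ+)

noncomputable def wt (L : ℕ+) : ℕ := if rr M L = 0 then (L:ℕ) else rr M L

lemma wt_pos (L : ℕ+) : 0 < wt M L := by
  unfold wt; split
  · exact L.pos
  · omega

lemma wt_modeq (L : ℕ+) : wt M L ≡ rr M L [MOD (L:ℕ)] := by
  unfold wt; split
  · rename_i h
    rw [h]
    exact (Nat.modEq_zero_iff_dvd.2 dvd_rfl)
  · rfl

lemma DN_of_dvd_wt {d : ℕ} {L : ℕ+} (h1 : d ∣ wt M L) (h2 : d ∣ (L:ℕ)) : DN M d := by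
  unfold wt at h1
  split at h1
  · rename_i h
    exact DN_of_dvd_rr M (h ▸ dvd_zero d) h2
  · exact DN_of_dvd_rr M h1 h2

noncomputable def dd (L : ℕ+) : ℕ := Nat.gcd (wt M L) (L:ℕ)
noncomputable def uu (L : ℕ+) : ℕ := wt M L / dd M L
noncomputable def LLf (L : ℕ+) : ℕ := (L:ℕ) / dd M L

lemma dd_pos (L : ℕ+) : 0 < dd M L := Nat.gcd_pos_of_pos_left _ (wt_pos M L)

lemma dd_DN (L : ℕ+) : DN M (dd M L) :=
  DN_of_dvd_wt M (Nat.gcd_dvd_left _ _) (Nat.gcd_dvd_right _ _)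

lemma dd_mul_uu (L : ℕ+) : dd M L * uu M L = wt M L :=
  Nat.mul_div_cancel' (Nat.gcd_dvd_left _ _)

lemma dd_mul_LLf (L : ℕ+) : dd M L * LLf M L = (L:ℕ) :=
  Nat.mul_div_cancel' (Nat.gcd_dvd_right _ _)

lemma coprime_uu_LLf (L : ℕ+) : Nat.Coprime (uu M L) (LLf M L) :=
  Nat.coprime_div_gcd_div_gcd (dd_pos M L)

lemma uu_pos (L : ℕ+) : 0 < uu M L :=
  Nat.div_pos (Nat.le_of_dvd (wt_pos M L) (Nat.gcd_dvd_left _ _)) (dd_pos M L)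

lemma LLf_pos (L : ℕ+) : 0 < LLf M L :=
  Nat.div_pos (Nat.le_of_dvd L.pos (Nat.gcd_dvd_right _ _)) (dd_pos M L)

/-- product of primes of `P` not dividing `a` -/
noncomputable def Qf (a P : ℕ) : ℕ :=
  ∏ p ∈ P.primeFactors.filter (fun p => ¬ p ∣ a), p

lemma prime_dvd_Qf {a P p : ℕ} (hp : p.Prime) (hdvd : p ∣ Qf a P) : ¬ p ∣ a := by
  unfold Qf at hdvd
  obtain ⟨q, hq, hpq⟩ := (Prime.dvd_finset_prod_iff hp.prime _).1 hdvd
  have hq2 := Finset.mem_filter.1 hq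
  have hqprime : Nat.Prime q := Nat.prime_of_mem_primeFactors hq2.1
  have : p = q := (Nat.prime_dvd_prime_iff_eq hp hqprime).1 hpq
  subst this
  exact hq2.2

lemma Qf_dvd_of {a P p : ℕ} (hp : p.Prime) (hP : P ≠ 0) (hpP : p ∣ P) (hpa : ¬ p ∣ a) :
    p ∣ Qf a P := by
  unfold Qf
  refine Finset.dvd_prod_of_mem _ ?_
  exact Finset.mem_filter.2 ⟨Nat.mem_primeFactors.2 ⟨hp, hpP, hP⟩, hpa⟩

def decodeL (n : ℕ) : ℕ+ := ⟨n / 2 + 1, Nat.succ_pos _⟩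

def enc (L : ℕ+) (ι : Bool) : ℕ := 2 * ((L:ℕ) - 1) + (if ι then 1 else 0)

lemma decodeL_enc (L : ℕ+) (ι : Bool) : decodeL (enc L ι) = L := by
  have hL := L.pos
  apply PNat.eq
  show (2 * ((L:ℕ) - 1) + (if ι then 1 else 0)) / 2 + 1 = (L:ℕ)
  rcases ι with _ | _ <;> simp <;> omega

lemma enc_ne (L L' : ℕ+) : enc L false ≠ enc L' true := by
  unfold enc; simp; omega

/-- the `u`-part of the step value -/
noncomputable def uPart (n P : ℕ) : ℕ :=
  uu M (decodeL n) + LLf M (decodeL n) * Qf (uu M (decodeL n) * LLf M (decodeL n)) P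

lemma uPart_pos (n P : ℕ) : 0 < uPart M n P :=
  Nat.lt_of_lt_of_le (uu_pos M _) (Nat.le_add_right _ _)

lemma not_dvd_uPart {n P p : ℕ} (hp : p.Prime) (hP : P ≠ 0) (hpP : p ∣ P) :
    ¬ p ∣ uPart M n P := by
  set L := decodeL n
  set u := uu M L with hu
  set l := LLf M L with hl
  intro hdvd
  by_cases hpl : p ∣ l
  · have hpu : p ∣ u := by
      have h1 : p ∣ l * Qf (u * l) P := hpl.mul_right _
      have h2 : u = (u + l * Qf (u * l) P) - l * Qf (u * l) P := by omega
      rw [h2]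
      exact Nat.dvd_sub hdvd h1
    have hg : p ∣ Nat.gcd u l := Nat.dvd_gcd hpu hpl
    have h1 : p ∣ 1 := (coprime_uu_LLf M L) ▸ hg
    exact hp.ne_one (Nat.dvd_one.1 h1)
  · by_cases hpu : p ∣ u
    · have hpQ : ¬ p ∣ Qf (u * l) P := by
        intro hq
        exact (prime_dvd_Qf hp hq) (hpu.mul_right l)
      have h2 : p ∣ l * Qf (u * l) P := by
        have h3 : l * Qf (u * l) P = (u + l * Qf (u * l) P) - u := by omega
        rw [h3]
        exact Nat.dvd_sub hdvd hpu
      rcases (Nat.Prime.dvd_mul hp).1 h2 with h | h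
      · exact hpl h
      · exact hpQ h
    · have hpa : ¬ p ∣ u * l := by
        intro h
        rcases (Nat.Prime.dvd_mul hp).1 h with h | h
        · exact hpu h
        · exact hpl h
      have hpQ : p ∣ Qf (u * l) P := Qf_dvd_of hp hP hpP hpa
      have h2 : p ∣ u := by
        have h3 : u = (u + l * Qf (u * l) P) - l * Qf (u * l) P := by omega
        rw [h3]
        exact Nat.dvd_sub hdvd (hpQ.mul_left l)
      exact hpu h2

end SD18B

namespace SD18B

open SD18

variable (M : Ultrafilter ℕ+)

noncomputable def Pp : ℕ → ℕ
  | 0 => 1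
  | n+1 => Pp n * (dd M (decodeL n) * uPart M n (Pp n))

noncomputable def kap (n : ℕ) : ℕ := dd M (decodeL n) * uPart M n (Pp M n)

lemma kap_pos (n : ℕ) : 0 < kap M n := Nat.mul_pos (dd_pos M _) (uPart_pos M _ _)

lemma Pp_pos : ∀ n, 0 < Pp M n
  | 0 => Nat.one_pos
  | (n+1) => Nat.mul_pos (Pp_pos n) (kap_pos M n)

lemma Pp_succ (n : ℕ) : Pp M (n+1) = Pp M n * kap M n := rfl

lemma kap_dvd_Pp {j n : ℕ} (h : j < n) : kap M j ∣ Pp M n := by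
  induction n with
  | zero => omega
  | succ n ih =>
    rw [Pp_succ]
    rcases Nat.lt_or_ge j n with h' | h'
    · exact (ih h').mul_right _
    · have : j = n := by omega
      subst this
      exact Dvd.intro_left _ rfl

lemma kap_modeq (n : ℕ) : kap M n ≡ rr M (decodeL n) [MOD ((decodeL n : ℕ+) : ℕ)] := by
  have h : kap M n = wt M (decodeL n)
      + ((decodeL n : ℕ+) : ℕ) * (Qf (uu M (decodeL n) * LLf M (decodeL n)) (Pp M n)) := by
    unfold kap uPart
    rw [mul_add, dd_mul_uu, ← mul_assoc, dd_mul_LLf]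
  rw [h]
  have h2 : (wt M (decodeL n)
        + ((decodeL n : ℕ+) : ℕ) * (Qf (uu M (decodeL n) * LLf M (decodeL n)) (Pp M n)))
        % ((decodeL n : ℕ+) : ℕ)
      = wt M (decodeL n) % ((decodeL n : ℕ+) : ℕ) := Nat.add_mul_mod_self_left _ _ _
  exact (Nat.ModEq.trans h2 (wt_modeq M _))

lemma junk_lemma {n m : ℕ} (h1 : m ∣ kap M n) (h2 : ¬ DN M m) :
    ∃ p, p.Prime ∧ p ∣ m ∧ p ∣ uPart M n (Pp M n) := by
  have hm0 : m ≠ 0 := by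
    rintro rfl
    rw [zero_dvd_iff] at h1
    exact (kap_pos M n).ne' h1
  by_contra hno
  push_neg at hno
  apply h2
  apply DN_of_prime_pows M hm0
  intro p a hp hpa
  rcases Nat.eq_zero_or_pos a with ha | ha
  · subst ha; simpa using DN_one M
  · have hpm : p ∣ m := (dvd_pow_self p ha.ne').trans hpa
    have hnd : ¬ p ∣ uPart M n (Pp M n) := hno p hp hpm
    have hcop : Nat.Coprime (p^a) (uPart M n (Pp M n)) :=
      Nat.Coprime.pow_left _ ((Nat.Prime.coprime_iff_not_dvd hp).2 hnd)
    have hdd : p^a ∣ dd M (decodeL n) := hcop.dvd_of_dvd_mul_right (hpa.trans h1)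
    exact DN_of_dvd M hdd (dd_DN M _)

lemma DN_of_dvd_two {j n m : ℕ} (hjn : j < n) (h1 : m ∣ kap M n) (h2 : m ∣ kap M j) :
    DN M m := by
  by_contra h
  obtain ⟨p, hp, hpm, hpu⟩ := junk_lemma M h1 h
  have hpP : p ∣ Pp M n := (hpm.trans h2).trans (kap_dvd_Pp M hjn)
  exact not_dvd_uPart M hp (Pp_pos M n).ne' hpP hpu

def Gset (ι : Bool) : Set ℕ+ := {m : ℕ+ | ∃ L : ℕ+, (m:ℕ) ∣ kap M (enc L ι)}

lemma G_inter {m : ℕ+} (h0 : m ∈ Gset M false) (h1 : m ∈ Gset M true) : DN M (m:ℕ) := by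
  obtain ⟨L0, hL0⟩ := h0
  obtain ⟨L1, hL1⟩ := h1
  have hne : enc L0 false ≠ enc L1 true := enc_ne _ _
  rcases Nat.lt_or_ge (enc L0 false) (enc L1 true) with h | h
  · exact DN_of_dvd_two M h hL1 hL0
  · exact DN_of_dvd_two M (lt_of_le_of_ne h (Ne.symm hne)) hL0 hL1

lemma exists_B0 (hD : {n : ℕ+ | DN M (n:ℕ)} ∉ M) :
    ∃ ι : Bool, {m : ℕ+ | DN M (m:ℕ) ∨ m ∈ Gset M ι} ∉ M := by
  by_contra h
  push_neg at h
  have h2 := Filter.inter_mem (h false) (h true)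
  apply hD
  refine Filter.mem_of_superset h2 ?_
  rintro m ⟨hm0, hm1⟩
  rcases hm0 with h' | h'
  · exact h'
  rcases hm1 with h'' | h''
  · exact h''
  exact G_inter M h' h''

end SD18B

namespace SD18B

open SD18

variable (M : Ultrafilter ℕ+)

def Csets (L : ℕ+) : Set ℤ := {z : ℤ | ((L:ℕ):ℤ) ∣ z - (rr M L : ℤ)}
def Avoid (B : Set ℕ+) : Set ℤ := {z : ℤ | ∀ m ∈ B, ¬ (((m:ℕ):ℤ) ∣ z)}
def DZs (A : Set ℕ+) : Set ℤ := {z : ℤ | ∃ m ∈ A, ((m:ℕ):ℤ) ∣ z}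
def Gam (A : Set ℕ+) : Set ℤ := {z : ℤ | ∃ m ∈ A, ((m:ℕ):ℤ) ∣ z - (rr M m : ℤ)}

lemma Csets_anti {d L : ℕ+} (h : (d:ℕ) ∣ (L:ℕ)) : Csets M L ⊆ Csets M d := by
  intro z hz
  have h1 : ((d:ℕ):ℤ) ∣ z - (rr M L : ℤ) := dvd_trans (Int.natCast_dvd_natCast.2 h) hz
  have h2 : ((d:ℕ):ℤ) ∣ ((rr M L : ℤ) - (rr M d : ℤ)) := by
    have h3 := (rr_coherent M h).dvd
    have h4 : ((rr M L : ℤ) - (rr M d : ℤ)) = -((rr M d : ℤ) - (rr M L : ℤ)) := by ring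
    rw [h4]
    exact dvd_neg.2 h3
  have h5 := dvd_add h1 h2
  have h6 : z - (rr M L : ℤ) + ((rr M L : ℤ) - (rr M d : ℤ)) = z - (rr M d : ℤ) := by ring
  rw [h6] at h5
  exact h5

lemma exists_ultra_Z {B : Set ℕ+} (Hw : ∀ L : ℕ+, (Csets M L ∩ Avoid B).Nonempty) :
    ∃ Z : Ultrafilter ℤ, (∀ L, Csets M L ∈ Z) ∧ Avoid B ∈ Z := by
  set S : Set (Set ℤ) := Set.range (fun L : ℕ+ => Csets M L ∩ Avoid B) with hS
  have hdir : ∀ t : Set (Set ℤ), t.Finite → t ⊆ S →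
      ∃ L : ℕ+, Csets M L ∩ Avoid B ⊆ ⋂₀ t := by
    intro t hfin
    refine Set.Finite.induction_on t hfin ?_ ?_
    · intro _; exact ⟨1, by simp⟩
    · rintro a s ha hs ih hsub
      obtain ⟨L1, hL1⟩ := ih (fun x hx => hsub (Set.mem_insert_of_mem _ hx))
      obtain ⟨L2, hL2⟩ := hsub (Set.mem_insert _ _)
      have hpos : 0 < Nat.lcm (L2:ℕ) (L1:ℕ) :=
        Nat.pos_of_ne_zero (Nat.lcm_ne_zero L2.pos.ne' L1.pos.ne')
      set L : ℕ+ := ⟨Nat.lcm (L2:ℕ) (L1:ℕ), hpos⟩ with hLdef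
      have hcoe : (L:ℕ) = Nat.lcm (L2:ℕ) (L1:ℕ) := rfl
      have hd2 : (L2:ℕ) ∣ (L:ℕ) := by rw [hcoe]; exact Nat.dvd_lcm_left _ _
      have hd1 : (L1:ℕ) ∣ (L:ℕ) := by rw [hcoe]; exact Nat.dvd_lcm_right _ _
      refine ⟨L, ?_⟩
      rw [Set.sInter_insert]
      intro z hz
      constructor
      · rw [← hL2]
        exact ⟨Csets_anti M hd2 hz.1, hz.2⟩
      · exact hL1 ⟨Csets_anti M hd1 hz.1, hz.2⟩
  have hne : Filter.NeBot (Filter.generate S) := by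
    rw [Filter.generate_neBot_iff]
    intro t hts htfin
    obtain ⟨L, hL⟩ := hdir t htfin hts
    exact (Hw L).mono hL
  obtain ⟨Z, hZ⟩ := Ultrafilter.exists_le (Filter.generate S)
  have hmem : ∀ L : ℕ+, Csets M L ∩ Avoid B ∈ Z := by
    intro L
    exact hZ (Filter.mem_generate_of_mem ⟨L, rfl⟩)
  refine ⟨Z, fun L => Filter.mem_of_superset (hmem L) Set.inter_subset_left, ?_⟩
  exact Filter.mem_of_superset (hmem 1) Set.inter_subset_right

lemma DZs_mono {A A' : Set ℕ+} (h : A ⊆ A') : DZs A ⊆ DZs A' := by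
  rintro z ⟨m, hm, hd⟩; exact ⟨m, h hm, hd⟩

lemma Gam_mono {A A' : Set ℕ+} (h : A ⊆ A') : Gam M A ⊆ Gam M A' := by
  rintro z ⟨m, hm, hd⟩; exact ⟨m, h hm, hd⟩

lemma exists_ultra_Y :
    ∃ Y : Ultrafilter ℤ, ∀ A ∈ M, ∀ B ∈ M, (DZs B ∩ Gam M A) ∈ Y := by
  set S : Set (Set ℤ) := {s : Set ℤ | ∃ A ∈ M, ∃ B ∈ M, s = DZs B ∩ Gam M A} with hS
  have hwit : ∀ A ∈ M, ∀ B ∈ M, (DZs B ∩ Gam M A).Nonempty := by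
    intro A hA B hB
    obtain ⟨x, ⟨m', hm', hd'⟩, ⟨m, hm, hd⟩⟩ := exists_witness M hA hB
    refine ⟨(x:ℤ), ⟨m', hm', Int.natCast_dvd_natCast.2 hd'⟩, ⟨m, hm, ?_⟩⟩
    have h3 := hd.dvd
    have h4 : ((x:ℤ) - (rr M m : ℤ)) = -((rr M m : ℤ) - (x:ℤ)) := by ring
    rw [h4]
    exact dvd_neg.2 h3
  have hdir : ∀ t : Set (Set ℤ), t.Finite → t ⊆ S →
      ∃ A ∈ M, ∃ B ∈ M, DZs B ∩ Gam M A ⊆ ⋂₀ t := by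
    intro t hfin
    refine Set.Finite.induction_on t hfin ?_ ?_
    · intro _; exact ⟨Set.univ, Filter.univ_mem, Set.univ, Filter.univ_mem, by simp⟩
    · rintro a s ha hs ih hsub
      obtain ⟨A1, hA1, B1, hB1, h1⟩ := ih (fun x hx => hsub (Set.mem_insert_of_mem _ hx))
      obtain ⟨A2, hA2, B2, hB2, h2⟩ := hsub (Set.mem_insert _ _)
      refine ⟨A1 ∩ A2, Filter.inter_mem hA1 hA2, B1 ∩ B2, Filter.inter_mem hB1 hB2, ?_⟩
      rw [Set.sInter_insert]
      intro z hz
      constructor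
      · rw [h2]
        exact ⟨DZs_mono Set.inter_subset_right hz.1, Gam_mono M Set.inter_subset_right hz.2⟩
      · exact h1 ⟨DZs_mono Set.inter_subset_left hz.1, Gam_mono M Set.inter_subset_left hz.2⟩
  have hne : Filter.NeBot (Filter.generate S) := by
    rw [Filter.generate_neBot_iff]
    intro t hts htfin
    obtain ⟨A, hA, B, hB, h⟩ := hdir t htfin hts
    exact (hwit A hA B hB).mono h
  obtain ⟨Y, hY⟩ := Ultrafilter.exists_le (Filter.generate S)
  exact ⟨Y, fun A hA B hB => hY (Filter.mem_generate_of_mem ⟨A, hA, B, hB, rfl⟩)⟩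

end SD18B

namespace SD18B

open SD18

lemma mult_eq (M : Ultrafilter ℕ+) (n : ℕ+) :
    {x : ℕ+ | ∃ k : ℕ+, x = n * k} = {x : ℕ+ | (n:ℕ) ∣ (x:ℕ)} := by
  ext x
  simp only [Set.mem_setOf_eq]
  constructor
  · rintro ⟨k, rfl⟩
    exact ⟨(k:ℕ), (PNat.mul_coe n k).symm ▸ rfl⟩
  · intro h
    obtain ⟨k, hk⟩ := PNat.dvd_iff.2 h
    exact ⟨k, hk⟩

lemma backward {M : Ultrafilter ℕ+} (hEq : Equivalence (congMod M)) :
    {n : ℕ+ | {x : ℕ+ | ∃ k : ℕ+, x = n * k} ∈ M} ∈ M := by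
  by_contra hD
  have hD' : {n : ℕ+ | DN M ((n:ℕ+):ℕ)} ∉ M := by
    intro h
    apply hD
    have hset : {n : ℕ+ | {x : ℕ+ | ∃ k : ℕ+, x = n * k} ∈ M}
        = {n : ℕ+ | DN M ((n:ℕ+):ℕ)} := by
      ext n
      simp only [Set.mem_setOf_eq, DN]
      rw [mult_eq M n]
    rw [hset]
    exact h
  obtain ⟨ι, hι⟩ := exists_B0 M hD'
  set B₀ : Set ℕ+ := {m : ℕ+ | DN M (m:ℕ) ∨ m ∈ Gset M ι}ᶜ with hB₀def
  have hB₀ : B₀ ∈ M := Ultrafilter.compl_mem_iff_notMem.2 hι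
  have Hw : ∀ L : ℕ+, (Csets M L ∩ Avoid B₀).Nonempty := by
    intro L
    refine ⟨(kap M (enc L ι) : ℤ), ?_, ?_⟩
    · have h := kap_modeq M (enc L ι)
      rw [decodeL_enc] at h
      have h2 := h.dvd
      show ((L:ℕ):ℤ) ∣ (kap M (enc L ι) : ℤ) - (rr M L : ℤ)
      have h4 : ((kap M (enc L ι) : ℤ) - (rr M L : ℤ))
          = -((rr M L : ℤ) - (kap M (enc L ι) : ℤ)) := by ring
      rw [h4]
      exact dvd_neg.2 h2
    · intro m hm hdvd
      have hdvd' : (m:ℕ) ∣ kap M (enc L ι) := Int.natCast_dvd_natCast.1 hdvd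
      exact hm (Or.inr ⟨L, hdvd'⟩)
  obtain ⟨Z, hZC, hZA⟩ := exists_ultra_Z M Hw
  obtain ⟨Y, hY⟩ := exists_ultra_Y M
  have h1 : congMod M (pure 0) Y := by
    intro A hA
    rw [mem_tensor]
    show {y : ℤ | ∃ m ∈ A, ((m:ℕ):ℤ) ∣ (0:ℤ) - y} ∈ Y
    refine Filter.mem_of_superset (hY A hA A hA) ?_
    rintro y ⟨⟨m, hm, hdvd⟩, -⟩
    refine ⟨m, hm, ?_⟩
    have : ((0:ℤ) - y) = -y := by ring
    rw [this]
    exact dvd_neg.2 hdvd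
  have h2 : congMod M Y Z := by
    intro A hA
    rw [mem_tensor]
    refine Filter.mem_of_superset (hY A hA Set.univ Filter.univ_mem) ?_
    rintro x ⟨-, ⟨m, hm, hdvd⟩⟩
    show {y : ℤ | ∃ m' ∈ A, ((m':ℕ):ℤ) ∣ x - y} ∈ Z
    refine Filter.mem_of_superset (hZC m) ?_
    intro y hy
    refine ⟨m, hm, ?_⟩
    have h5 := dvd_sub hdvd hy
    have h6 : (x - (rr M m : ℤ)) - (y - (rr M m : ℤ)) = x - y := by ring
    rw [h6] at h5
    exact h5
  have h3 := hEq.trans h1 h2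
  have h4 := h3 B₀ hB₀
  rw [mem_tensor] at h4
  have h5 : {y : ℤ | ∃ m ∈ B₀, ((m:ℕ):ℤ) ∣ (0:ℤ) - y} ∈ Z := h4
  obtain ⟨y, hy1, hy2⟩ := Ultrafilter.nonempty_of_mem (Filter.inter_mem h5 hZA)
  obtain ⟨m, hm, hdvd⟩ := hy1
  apply hy2 m hm
  have : y = -((0:ℤ) - y) := by ring
  rw [this]
  exact dvd_neg.2 hdvd

end SD18B

theorem stmt18 (M : Ultrafilter ℕ+) :
    -- `M` is self-divisible, i.e. `D(M) = {n : nℕ ∈ M} ∈ M`, iff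
    -- `≡_M` is an equivalence relation on `βℤ`.
    {n : ℕ+ | {x : ℕ+ | ∃ k : ℕ+, x = n * k} ∈ M} ∈ M ↔ Equivalence (congMod M) := by
  exact ⟨SD18F.forward, SD18B.backward⟩
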